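/- There is no nonprincipal ultrafilter V on ℕ that is universally measurable as a subset of 𝒫(ℕ) ≅ 2^ℕ; equivalently, a nonprincipal ultrafilter, viewed as a subset of Cantor space, is not measurable with respect to every complete finite Borel measure (in particular, it is not Lebesgue/Haar measurable). -/

import Mathlib

open MeasureTheory

open scoped symmDiff ENNReal Pointwise

/-- A subset of Cantor space is universally measurable if it is measurable with
respect to (the completion of) every finite Borel measure. -/
def UnivMeasurable (s : Set (ℕ → Bool)) : Prop :=
  ∀ ν : Measure (ℕ → Bool), IsFiniteMeasure ν → NullMeasurableSet s ν

private lemma ultra_symmDiff (V : Ultrafilter ℕ) (A B : Set ℕ) :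
    A ∆ B ∈ V ↔ ¬(A ∈ V ↔ B ∈ V) := by
  by_cases hA : A ∈ V <;> by_cases hB : B ∈ V
  · have h : A ∩ B ⊆ (A ∆ B)ᶜ := by
      intro n hn
      obtain ⟨hn1, hn2⟩ := hn
      simp only [Set.mem_compl_iff, Set.mem_symmDiff]
      tauto
    have : (A ∆ B)ᶜ ∈ V := Filter.mem_of_superset (Filter.inter_mem hA hB) h
    rw [Ultrafilter.compl_mem_iff_notMem] at this
    simp [this, hA, hB]
  · have h : A ∩ Bᶜ ⊆ A ∆ B := by
      intro n hn
      obtain ⟨hn1, hn2⟩ := hn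
      simp only [Set.mem_symmDiff]
      tauto
    have : A ∆ B ∈ V :=
      Filter.mem_of_superset (Filter.inter_mem hA (Ultrafilter.compl_mem_iff_notMem.2 hB)) h
    simp [this, hA, hB]
  · have h : B ∩ Aᶜ ⊆ A ∆ B := by
      intro n hn
      obtain ⟨hn1, hn2⟩ := hn
      simp only [Set.mem_symmDiff]
      tauto
    have : A ∆ B ∈ V :=
      Filter.mem_of_superset (Filter.inter_mem hB (Ultrafilter.compl_mem_iff_notMem.2 hA)) h
    simp [this, hA, hB]
  · have h : Aᶜ ∩ Bᶜ ⊆ (A ∆ B)ᶜ := by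
      intro n hn
      obtain ⟨hn1, hn2⟩ := hn
      simp only [Set.mem_compl_iff, Set.mem_symmDiff]
      tauto
    have : (A ∆ B)ᶜ ∈ V :=
      Filter.mem_of_superset
        (Filter.inter_mem (Ultrafilter.compl_mem_iff_notMem.2 hA)
          (Ultrafilter.compl_mem_iff_notMem.2 hB)) h
    rw [Ultrafilter.compl_mem_iff_notMem] at this
    simp [this, hA, hB]

private lemma add_set (f g : ℕ → Bool) :
    {n : ℕ | (f + g) n = true} = {n : ℕ | f n = true} ∆ {n : ℕ | g n = true} := by
  ext n
  simp only [Set.mem_setOf_eq, Set.mem_symmDiff, Pi.add_apply]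
  cases hf : f n <;> cases hg : g n <;> simp <;> decide

theorem stmt10 (V : Ultrafilter ℕ) (hV : ∀ a : ℕ, V ≠ pure a) :
    ¬ UnivMeasurable {f : ℕ → Bool | {n : ℕ | f n = true} ∈ V} := by
  classical
  intro hU
  set S : Set (ℕ → Bool) := {f : ℕ → Bool | {n : ℕ | f n = true} ∈ V} with hS
  -- finite sets are not in V
  have hfin : ∀ F : Set ℕ, F.Finite → F ∉ V := by
    intro F hF hFV
    obtain ⟨a, _, ha⟩ := Ultrafilter.eq_pure_of_finite_mem hF hFV
    exact hV a ha
  -- complement of S is closed under addition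
  have hSc_add : ∀ f g : ℕ → Bool, f ∈ Sᶜ → g ∈ Sᶜ → f + g ∈ Sᶜ := by
    intro f g hf hg
    simp only [hS, Set.mem_compl_iff, Set.mem_setOf_eq] at *
    rw [add_set, ultra_symmDiff]
    tauto
  -- the Haar measure
  let μ : Measure (ℕ → Bool) := Measure.addHaarMeasure ⊤
  haveI h1 : μ.IsAddHaarMeasure := Measure.isAddHaarMeasure_addHaarMeasure ⊤
  haveI h2 : μ.Regular := Measure.regular_addHaarMeasure
  haveI h4 : IsProbabilityMeasure μ :=
    ⟨by simpa using
      Measure.addHaarMeasure_self (K₀ := (⊤ : TopologicalSpace.PositiveCompacts (ℕ → Bool)))⟩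
  haveI h3 : μ.InnerRegular := inferInstance
  have hSm : NullMeasurableSet S μ := hU μ inferInstance
  -- the translation by the constant `true` function swaps `S` and `Sᶜ`
  let c : ℕ → Bool := fun _ => true
  have hswap : (fun h => c + h) ⁻¹' Sᶜ = S := by
    ext f
    simp only [Set.mem_preimage, hS, Set.mem_compl_iff, Set.mem_setOf_eq]
    rw [add_set, ultra_symmDiff]
    have hcuniv : {n : ℕ | c n = true} = Set.univ := by
      ext n; simp [c]
    rw [hcuniv]
    have huniv : (Set.univ : Set ℕ) ∈ V := Filter.univ_mem
    tauto
  have hμeq : μ S = μ Sᶜ := by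
    conv_lhs => rw [← hswap]
    exact measure_preimage_add μ c Sᶜ
  -- μ Sᶜ > 0
  have hpos : 0 < μ Sᶜ := by
    by_contra h
    push_neg at h
    have h0 : μ Sᶜ = 0 := le_antisymm h zero_le
    have : (1 : ℝ≥0∞) ≤ μ S + μ Sᶜ := by
      have := measure_union_le (μ := μ) S Sᶜ
      rwa [Set.union_compl_self, measure_univ] at this
    rw [hμeq, h0] at this
    simp at this
  -- a measurable subset of Sᶜ of positive measure
  obtain ⟨E, hES, hEm, hEae⟩ := hSm.compl.exists_measurable_subset_ae_eq
  have hEpos : 0 < μ E := by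
    rwa [measure_congr hEae]
  -- Steinhaus: E - E is a neighborhood of 0, hence so is Sᶜ
  have hnhds : E - E ∈ nhds (0 : ℕ → Bool) :=
    Measure.sub_mem_nhds_zero_of_addHaar_pos μ E hEm hEpos
  have hsub : E - E ⊆ Sᶜ := by
    rintro x ⟨a, ha, b, hb, rfl⟩
    have hab : a - b = a + b := by
      funext n
      show a n - b n = a n + b n
      cases a n <;> cases b n <;> decide
    show a - b ∈ Sᶜ
    rw [hab]
    exact hSc_add a b (hES ha) (hES hb)
  have hScnhds : Sᶜ ∈ nhds (0 : ℕ → Bool) := Filter.mem_of_superset hnhds hsub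
  -- extract a cylinder inside Sᶜ
  rw [nhds_pi, Filter.mem_pi] at hScnhds
  obtain ⟨I, hIfin, t, ht, htsub⟩ := hScnhds
  -- decompose the constant true function
  have hc : c ∈ S := by
    show {n : ℕ | c n = true} ∈ V
    have : {n : ℕ | c n = true} = Set.univ := by ext n; simp [c]
    rw [this]; exact Filter.univ_mem
  let x₁ : ℕ → Bool := fun n => if n ∈ I then true else false
  let x₂ : ℕ → Bool := fun n => if n ∈ I then false else true
  have hx₁ : x₁ ∈ Sᶜ := by
    simp only [hS, Set.mem_compl_iff, Set.mem_setOf_eq]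
    apply hfin
    apply hIfin.subset
    intro n hn
    simp only [Set.mem_setOf_eq, x₁] at hn
    by_contra hnI
    simp [hnI] at hn
  have hx₂ : x₂ ∈ Sᶜ := by
    apply htsub
    intro i hi
    have h0 : (0 : ℕ → Bool) i ∈ t i := mem_of_mem_nhds (ht i)
    have hx2i : x₂ i = false := by simp [x₂, hi]
    rw [hx2i]; exact h0
  have hx : x₁ + x₂ = c := by
    funext n
    by_cases hn : n ∈ I <;> simp [x₁, x₂, hn, c] <;> decide
  have : c ∈ Sᶜ := by
    rw [← hx]
    exact hSc_add x₁ x₂ hx₁ hx₂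
  exact this hc
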